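/- arXiv:2105.01012 — 3 statements merged into one kernel-verified Lean document; each statement's English description precedes it below -/
import Mathlib

section
/- Let X be a compact metrizable space equipped with its Borel σ-algebra, let R be a closed relation on X, and let μ be a Borel probability measure on X such that μ(K) ≤ μ(R(K)) and μ(K) ≤ μ(R†(K)) for every compact set K ⊆ X (note that R(K) and R†(K) are compact, hence Borel). Then for every point z in the support of μ and every n ∈ ℤ₊, both R^n(z) ∩ supp(μ) ≠ ∅ and (R^n)†(z) ∩ supp(μ) ≠ ∅; in particular every point of supp(μ) returns to supp(μ) at every time n. -/
open MeasureTheory Set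

/-- Forward image of a set under a relation. -/
def relImg {X : Type*} (R : Set (X × X)) (A : Set X) : Set X :=
  {y | ∃ x ∈ A, (x, y) ∈ R}

/-- Backward image (adjoint image) of a set under a relation. -/
def relDag {X : Type*} (R : Set (X × X)) (A : Set X) : Set X :=
  {x | ∃ y ∈ A, (x, y) ∈ R}

/-- Iterates of a relation: `R⁰` is the identity relation and
`R^{n+1} = {(x,z) : ∃ y, (x,y) ∈ R ∧ (y,z) ∈ R^n}`. -/
def relIter {X : Type*} (R : Set (X × X)) : ℕ → Set (X × X)
  | 0 => {p | p.1 = p.2}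
  | n + 1 => {p | ∃ y, (p.1, y) ∈ R ∧ (y, p.2) ∈ relIter R n}

/-- The support of a Borel measure: the set of points all of whose open neighborhoods
have positive measure. -/
def measSupp {X : Type*} [TopologicalSpace X] [MeasurableSpace X]
    (μ : MeasureTheory.Measure X) : Set X :=
  {x | ∀ U : Set X, IsOpen U → x ∈ U → 0 < μ U}

/-- The complement of the support is a (countable) union of open null sets, hence null. -/
lemma measSupp_compl_null {X : Type*} [TopologicalSpace X] [SecondCountableTopology X]
    [MeasurableSpace X] (μ : Measure X) : μ (measSupp μ)ᶜ = 0 := by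
  obtain ⟨B, hBc, -, hB⟩ := TopologicalSpace.exists_countable_basis X
  have hsub : (measSupp μ)ᶜ ⊆ ⋃ V ∈ {V ∈ B | μ V = 0}, V := by
    intro x hx
    simp only [measSupp, mem_compl_iff, mem_setOf_eq, not_forall] at hx
    obtain ⟨U, hU, hxU, hμU⟩ := hx
    have hμU0 : μ U = 0 := by simpa [pos_iff_ne_zero] using hμU
    obtain ⟨V, hVB, hxV, hVU⟩ := hB.exists_subset_of_mem_open hxU hU
    exact mem_biUnion ⟨hVB, le_antisymm (hμU0 ▸ measure_mono hVU) (zero_le)⟩ hxV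
  refine le_antisymm (le_trans (measure_mono hsub) (le_of_eq ?_)) (zero_le)
  exact (measure_biUnion_null_iff (hBc.mono (sep_subset _ _))).2 fun V hV => hV.2

/-- The support is closed. -/
lemma isClosed_measSupp {X : Type*} [TopologicalSpace X] [MeasurableSpace X]
    (μ : Measure X) : IsClosed (measSupp μ) := by
  rw [← isOpen_compl_iff]
  have : (measSupp μ)ᶜ = ⋃₀ {U | IsOpen U ∧ μ U = 0} := by
    ext x
    simp only [measSupp, mem_compl_iff, mem_setOf_eq, not_forall, mem_sUnion]
    constructor
    · rintro ⟨U, hU, hxU, hμU⟩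
      exact ⟨U, ⟨hU, by simpa [pos_iff_ne_zero] using hμU⟩, hxU⟩
    · rintro ⟨U, ⟨hU, hμU⟩, hxU⟩
      exact ⟨U, hU, hxU, by simp [hμU]⟩
  rw [this]
  exact isOpen_sUnion fun U hU => hU.1

lemma isCompact_relDag {X : Type*} [TopologicalSpace X] [CompactSpace X]
    {R : Set (X × X)} (hR : IsClosed R) {C : Set X} (hC : IsClosed C) :
    IsCompact (relDag R C) := by
  have h1 : IsCompact (R ∩ Prod.snd ⁻¹' C) :=
    (hR.inter (hC.preimage continuous_snd)).isCompact
  have : relDag R C = Prod.fst '' (R ∩ Prod.snd ⁻¹' C) := by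
    ext x
    constructor
    · rintro ⟨y, hy, hxy⟩; exact ⟨(x, y), ⟨hxy, hy⟩, rfl⟩
    · rintro ⟨⟨a, b⟩, ⟨hab, hb⟩, rfl⟩; exact ⟨b, hb, hab⟩
  rw [this]
  exact h1.image continuous_fst

lemma isCompact_relImg {X : Type*} [TopologicalSpace X] [CompactSpace X]
    {R : Set (X × X)} (hR : IsClosed R) {C : Set X} (hC : IsClosed C) :
    IsCompact (relImg R C) := by
  have h1 : IsCompact (R ∩ Prod.fst ⁻¹' C) :=
    (hR.inter (hC.preimage continuous_fst)).isCompact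
  have : relImg R C = Prod.snd '' (R ∩ Prod.fst ⁻¹' C) := by
    ext y
    constructor
    · rintro ⟨x, hx, hxy⟩; exact ⟨(x, y), ⟨hxy, hx⟩, rfl⟩
    · rintro ⟨⟨a, b⟩, ⟨hab, ha⟩, rfl⟩; exact ⟨a, ha, hab⟩
  rw [this]
  exact h1.image continuous_snd

/-- One forward step: any support point has an `R`-successor in the support. -/
lemma step_fwd {X : Type*} [MetricSpace X] [CompactSpace X]
    [MeasurableSpace X] [BorelSpace X]
    {R : Set (X × X)} (hR : IsClosed R) (μ : Measure X)
    (hfwd : ∀ K : Set X, IsCompact K → μ K ≤ μ (relImg R K))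
    {z : X} (hz : z ∈ measSupp μ) : ∃ y ∈ measSupp μ, (z, y) ∈ R := by
  by_contra h
  push_neg at h
  -- `z` is not in the compact set `D = relDag R (measSupp μ)`
  set D := relDag R (measSupp μ) with hD
  have hDc : IsCompact D := isCompact_relDag hR (isClosed_measSupp μ)
  have hzD : z ∉ D := by
    rintro ⟨y, hy, hzy⟩; exact h y hy hzy
  have hDop : IsOpen Dᶜ := hDc.isClosed.isOpen_compl
  obtain ⟨ε, hε, hball⟩ := Metric.isOpen_iff.1 hDop z hzD
  set K := Metric.closedBall z (ε / 2) with hK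
  have hKc : IsCompact K := (Metric.isClosed_closedBall).isCompact
  have hKsub : K ⊆ Dᶜ := fun x hx =>
    hball (Metric.mem_ball.2 (lt_of_le_of_lt (Metric.mem_closedBall.1 hx) (by linarith)))
  have hμK : 0 < μ K :=
    lt_of_lt_of_le (hz _ Metric.isOpen_ball (Metric.mem_ball_self (by linarith)))
      (measure_mono Metric.ball_subset_closedBall)
  have himg : relImg R K ⊆ (measSupp μ)ᶜ := by
    rintro y ⟨x, hxK, hxy⟩ hy
    exact hKsub hxK ⟨y, hy, hxy⟩
  have : μ (relImg R K) = 0 :=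
    le_antisymm (le_trans (measure_mono himg)
      (le_of_eq (measSupp_compl_null μ))) (zero_le)
  exact absurd (hfwd K hKc) (by rw [this]; exact not_le.2 hμK)

/-- One backward step: any support point has an `R`-predecessor in the support. -/
lemma step_bwd {X : Type*} [MetricSpace X] [CompactSpace X]
    [MeasurableSpace X] [BorelSpace X]
    {R : Set (X × X)} (hR : IsClosed R) (μ : Measure X)
    (hbwd : ∀ K : Set X, IsCompact K → μ K ≤ μ (relDag R K))
    {z : X} (hz : z ∈ measSupp μ) : ∃ x ∈ measSupp μ, (x, z) ∈ R := by
  by_contra h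
  push_neg at h
  set D := relImg R (measSupp μ) with hD
  have hDc : IsCompact D := isCompact_relImg hR (isClosed_measSupp μ)
  have hzD : z ∉ D := by
    rintro ⟨x, hx, hxz⟩; exact h x hx hxz
  have hDop : IsOpen Dᶜ := hDc.isClosed.isOpen_compl
  obtain ⟨ε, hε, hball⟩ := Metric.isOpen_iff.1 hDop z hzD
  set K := Metric.closedBall z (ε / 2) with hK
  have hKc : IsCompact K := (Metric.isClosed_closedBall).isCompact
  have hKsub : K ⊆ Dᶜ := fun x hx =>
    hball (Metric.mem_ball.2 (lt_of_le_of_lt (Metric.mem_closedBall.1 hx) (by linarith)))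
  have hμK : 0 < μ K :=
    lt_of_lt_of_le (hz _ Metric.isOpen_ball (Metric.mem_ball_self (by linarith)))
      (measure_mono Metric.ball_subset_closedBall)
  have himg : relDag R K ⊆ (measSupp μ)ᶜ := by
    rintro x ⟨y, hyK, hxy⟩ hx
    exact hKsub hyK ⟨x, hx, hxy⟩
  have : μ (relDag R K) = 0 :=
    le_antisymm (le_trans (measure_mono himg)
      (le_of_eq (measSupp_compl_null μ))) (zero_le)
  exact absurd (hbwd K hKc) (by rw [this]; exact not_le.2 hμK)

/-- **Invariance of the support** (relation-theoretic content of Theorem 1.4 of the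
paper): every point of the support of `μ` returns to the support, forwards and
backwards, at every time `n ≥ 1`. -/
theorem support_invariance_closed_relation
    {X : Type*} [TopologicalSpace X] [CompactSpace X] [TopologicalSpace.MetrizableSpace X]
    [MeasurableSpace X] [BorelSpace X]
    (R : Set (X × X)) (hR : IsClosed R)
    (μ : Measure X) [IsProbabilityMeasure μ]
    (hfwd : ∀ K : Set X, IsCompact K → μ K ≤ μ (relImg R K))
    (hbwd : ∀ K : Set X, IsCompact K → μ K ≤ μ (relDag R K)) :
    ∀ z ∈ measSupp μ, ∀ n : ℕ, 1 ≤ n →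
      (relImg (relIter R n) {z} ∩ measSupp μ).Nonempty ∧
      (relDag (relIter R n) {z} ∩ measSupp μ).Nonempty := by
  letI : MetricSpace X := TopologicalSpace.metrizableSpaceMetric X
  have fwd : ∀ (m : ℕ) (z : X), z ∈ measSupp μ →
      ∃ w ∈ measSupp μ, (z, w) ∈ relIter R (m + 1) := by
    intro m
    induction m with
    | zero =>
      intro z hz
      obtain ⟨y, hy, hzy⟩ := step_fwd hR μ hfwd hz
      exact ⟨y, hy, ⟨y, hzy, rfl⟩⟩
    | succ m ih =>
      intro z hz
      obtain ⟨y, hy, hzy⟩ := step_fwd hR μ hfwd hz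
      obtain ⟨w, hw, hyw⟩ := ih y hy
      exact ⟨w, hw, ⟨y, hzy, hyw⟩⟩
  have bwd : ∀ (m : ℕ) (z : X), z ∈ measSupp μ →
      ∃ w ∈ measSupp μ, (w, z) ∈ relIter R (m + 1) := by
    intro m
    induction m with
    | zero =>
      intro z hz
      obtain ⟨x, hx, hxz⟩ := step_bwd hR μ hbwd hz
      exact ⟨x, hx, ⟨z, hxz, rfl⟩⟩
    | succ m ih =>
      intro z hz
      obtain ⟨y, hy, hyz⟩ := ih z hz
      obtain ⟨x, hx, hxy⟩ := step_bwd hR μ hbwd hy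
      exact ⟨x, hx, ⟨y, hxy, hyz⟩⟩
  intro z hz n hn
  obtain ⟨m, rfl⟩ : ∃ m, n = m + 1 := ⟨n - 1, by omega⟩
  constructor
  · obtain ⟨w, hw, hzw⟩ := fwd m z hz
    exact ⟨w, ⟨z, rfl, hzw⟩, hw⟩
  · obtain ⟨w, hw, hwz⟩ := bwd m z hz
    exact ⟨w, ⟨z, rfl, hwz⟩, hw⟩
end

section
/- Let X be a compact metrizable space equipped with its Borel σ-algebra, let R be a closed relation on X, let μ be a Borel probability measure on X such that μ(K) ≤ μ(R†(K)) for every compact set K ⊆ X, and let B ⊆ X be a Borel set. For n ∈ ℕ define E_n := ⋃_{j ≥ n} (R^j)†(B), where (R⁰)†(B) := B. Then: (i) each E_n is μ-null-measurable; (ii) E_{n+1} ⊆ E_n for all n; (iii) R†(E_n) = E_{n+1} for all n; and (iv) μ(E_n) = μ(E_0) for all n ∈ ℕ (measures computed in the completion of μ). -/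
open MeasureTheory Set

open scoped ENNReal
open Filter

/-- Course-of-values recursion helper used to choose a sequence of bounds. -/
noncomputable def covRec (G : (ℕ → ℕ) → ℕ → ℕ) : ℕ → ℕ
  | k => G (fun i => if _ : i < k then covRec G i else 0) k
  decreasing_by assumption

/-- Capacitability: an analytic set in a Polish space can be approximated from inside by
compact sets, in outer measure, for any finite Borel measure. -/
lemma analytic_inner_compact {X : Type*} [TopologicalSpace X] [PolishSpace X]
    [MeasurableSpace X] [BorelSpace X]
    (μ : Measure X) [IsFiniteMeasure μ] {A : Set X} (hA : MeasureTheory.AnalyticSet A)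
    {ε : ℝ≥0∞} (hε0 : ε ≠ 0) :
    ∃ K : Set X, IsCompact K ∧ K ⊆ A ∧ μ A ≤ μ K + ε := by
  by_cases hεt : ε = ⊤
  · exact ⟨∅, isCompact_empty, empty_subset _, by simp [hεt]⟩
  rcases (MeasureTheory.AnalyticSet_def A ▸ hA) with hA0 | ⟨f, hf, hfr⟩
  · exact ⟨∅, isCompact_empty, empty_subset _, by simp [hA0]⟩
  -- halving identity
  have hhalf : ∀ k : ℕ, ε / 2 ^ (k+1) + ε / 2 ^ (k+1) = ε / 2 ^ k := by
    intro k
    rw [ENNReal.div_add_div_same, ← two_mul, pow_succ, mul_comm ((2:ℝ≥0∞)^k) 2,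
      ENNReal.mul_div_mul_left _ _ two_ne_zero ENNReal.ofNat_ne_top]
  have hεk0 : ∀ k : ℕ, ε / 2 ^ (k+1) ≠ 0 := by
    intro k
    exact ENNReal.div_ne_zero.2 ⟨hε0, ENNReal.pow_ne_top ENNReal.ofNat_ne_top⟩
  -- choice of a good bound at each level
  have hex : ∀ (s : ℕ → ℕ) (k : ℕ), ∃ m : ℕ,
      μ (f '' {x | ∀ i < k, x i ≤ s i}) ≤
        μ (f '' {x | (∀ i < k, x i ≤ s i) ∧ x k ≤ m}) + ε / 2 ^ (k+1) := by
    intro s k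
    set T : ℕ → Set X := fun m => f '' {x | (∀ i < k, x i ≤ s i) ∧ x k ≤ m} with hT
    have hmono : Monotone T := by
      intro m m' hmm
      exact image_mono (fun x hx => ⟨hx.1, hx.2.trans hmm⟩)
    have hdom : (⋃ m : ℕ, {x : ℕ → ℕ | (∀ i < k, x i ≤ s i) ∧ x k ≤ m}) =
        {x : ℕ → ℕ | ∀ i < k, x i ≤ s i} := by
      ext x
      simp only [mem_iUnion, mem_setOf_eq]
      exact ⟨fun ⟨m, h1, _⟩ => h1, fun h => ⟨x k, h, le_rfl⟩⟩
    have hun : (⋃ m, T m) = f '' {x | ∀ i < k, x i ≤ s i} := by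
      rw [hT, ← image_iUnion, hdom]
    have hsup : μ (f '' {x | ∀ i < k, x i ≤ s i}) = ⨆ m, μ (T m) := by
      rw [← hun]; exact hmono.measure_iUnion
    set c := μ (f '' {x | ∀ i < k, x i ≤ s i}) with hc
    by_cases h0 : c ≤ ε / 2 ^ (k+1)
    · exact ⟨0, h0.trans le_add_self⟩
    push_neg at h0
    have hc0 : c ≠ 0 := ((zero_le : (0:ℝ≥0∞) ≤ ε / 2 ^ (k+1)).trans_lt h0).ne'
    have hct : c ≠ ⊤ := measure_ne_top μ _
    have hlt : c - ε / 2 ^ (k+1) < ⨆ m, μ (T m) := by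
      rw [← hsup]
      exact ENNReal.sub_lt_self hct hc0 (hεk0 k)
    obtain ⟨m, hm⟩ := lt_iSup_iff.1 hlt
    exact ⟨m, tsub_le_iff_right.1 hm.le⟩
  set G : (ℕ → ℕ) → ℕ → ℕ := fun s k => (hex s k).choose with hG
  set g : ℕ → ℕ := covRec G with hg
  set Ns : ℕ → Set (ℕ → ℕ) := fun k => {x | ∀ i < k, x i ≤ g i} with hNs
  -- one recursion step
  have hstep : ∀ k, μ (f '' Ns k) ≤ μ (f '' Ns (k+1)) + ε / 2 ^ (k+1) := by
    intro k
    set s : ℕ → ℕ := fun i => if _ : i < k then g i else 0 with hs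
    have hgk : g k = G s k := by rw [hg]; rw [covRec]
    have hsi : ∀ i, i < k → s i = g i := by
      intro i hi
      simp [hs, hi]
    have h1 : {x : ℕ → ℕ | ∀ i < k, x i ≤ s i} = Ns k := by
      ext x
      simp only [hNs, mem_setOf_eq]
      constructor
      · intro h i hi; have := h i hi; rwa [hsi i hi] at this
      · intro h i hi; rw [hsi i hi]; exact h i hi
    have h2 : {x : ℕ → ℕ | (∀ i < k, x i ≤ s i) ∧ x k ≤ G s k} = Ns (k+1) := by
      ext x
      simp only [hNs, mem_setOf_eq]
      constructor
      · rintro ⟨h, hk⟩ i hi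
        rcases Nat.lt_succ_iff_lt_or_eq.1 hi with hi' | rfl
        · have := h i hi'; rwa [hsi i hi'] at this
        · rw [hgk]; exact hk
      · intro h
        refine ⟨fun i hi => ?_, ?_⟩
        · rw [hsi i hi]; exact h i (hi.trans (Nat.lt_succ_self k))
        · rw [← hgk]; exact h k (Nat.lt_succ_self k)
    have hspec : μ (f '' {x | ∀ i < k, x i ≤ s i}) ≤
        μ (f '' {x : ℕ → ℕ | (∀ i < k, x i ≤ s i) ∧ x k ≤ G s k}) + ε / 2 ^ (k+1) :=
      (hex s k).choose_spec
    rw [h1, h2] at hspec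
    exact hspec
  -- invariant
  set S : ℕ → ℝ≥0∞ := fun k => ∑ i ∈ Finset.range k, ε / 2 ^ (i+1) with hSdef
  have hS : ∀ k, S k + ε / 2 ^ k = ε := by
    intro k
    induction k with
    | zero => simp [hSdef]
    | succ k ih =>
      rw [hSdef]
      simp only [Finset.sum_range_succ]
      rw [add_assoc, hhalf k]
      exact ih
  have hSle : ∀ k, S k ≤ ε := fun k => (hS k) ▸ le_self_add
  have hinvk : ∀ k, μ A ≤ μ (f '' Ns k) + S k := by
    intro k
    induction k with
    | zero =>
      have : Ns 0 = univ := by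
        ext x; simp [hNs]
      rw [this, image_univ, hfr]
      simp [hSdef]
    | succ k ih =>
      calc μ A ≤ μ (f '' Ns k) + S k := ih
        _ ≤ (μ (f '' Ns (k+1)) + ε / 2 ^ (k+1)) + S k := add_le_add_left (hstep k) _
        _ = μ (f '' Ns (k+1)) + S (k+1) := by
            rw [hSdef]; simp only [Finset.sum_range_succ]; ring
  have hAk : ∀ k, μ A ≤ μ (f '' Ns k) + ε :=
    fun k => (hinvk k).trans (add_le_add_right (hSle k) _)
  -- the compact set
  set C : Set (ℕ → ℕ) := univ.pi fun i => Iic (g i) with hC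
  have hCc : IsCompact C := isCompact_univ_pi fun i => (Set.finite_Iic _).isCompact
  set K := f '' C with hK
  have hKc : IsCompact K := hCc.image hf
  have hKA : K ⊆ A := by rw [hK, ← hfr]; exact image_subset_range f C
  -- covering property
  have hcov : ∀ U : Set X, IsOpen U → K ⊆ U → ∃ k, f '' Ns k ⊆ U := by
    intro U hU hKU
    by_contra h
    push_neg at h
    have hpt : ∀ k, ∃ z, z ∈ Ns k ∧ f z ∉ U := by
      intro k
      rcases not_subset.1 (h k) with ⟨a, ha, haU⟩
      rcases ha with ⟨z, hz, rfl⟩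
      exact ⟨z, hz, haU⟩
    choose x hx1 hx2 using hpt
    set y : ℕ → (ℕ → ℕ) := fun k i => min (x k i) (g i) with hy
    have hyC : ∀ k, y k ∈ C := by
      intro k
      rw [hC]
      intro i _
      exact mem_Iic.2 (min_le_right _ _)
    obtain ⟨a, haC, φ, hφ, hty⟩ := hCc.tendsto_subseq hyC
    have htx : Tendsto (fun j => x (φ j)) atTop (nhds a) := by
      rw [tendsto_pi_nhds]
      intro i
      have hcoord : Tendsto (fun j => y (φ j) i) atTop (nhds (a i)) :=
        tendsto_pi_nhds.1 hty i
      have hb : ∀ᶠ j in atTop, i < φ j := hφ.tendsto_atTop.eventually_gt_atTop i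
      refine hcoord.congr' (hb.mono fun j hj => ?_)
      rw [hy]
      exact min_eq_left (hx1 (φ j) i hj)
    have hfx : Tendsto (fun j => f (x (φ j))) atTop (nhds (f a)) :=
      (hf.tendsto a).comp htx
    have hfaU : f a ∈ U := hKU ⟨a, haC, rfl⟩
    obtain ⟨j, hj⟩ := (hfx.eventually (hU.mem_nhds hfaU)).exists
    exact hx2 (φ j) hj
  refine ⟨K, hKc, hKA, ?_⟩
  apply ENNReal.le_of_forall_pos_le_add
  intro δ hδ _
  obtain ⟨U, hKU, hUo, hUlt⟩ := Set.exists_isOpen_lt_of_lt K (μ K + δ)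
    (ENNReal.lt_add_right (measure_ne_top μ K) (by exact_mod_cast hδ.ne'))
  obtain ⟨k, hk⟩ := hcov U hUo hKU
  calc μ A ≤ μ (f '' Ns k) + ε := hAk k
    _ ≤ μ U + ε := add_le_add_left (measure_mono hk) _
    _ ≤ (μ K + δ) + ε := add_le_add_left hUlt.le _
    _ = μ K + ε + δ := by ring

/-- Analytic sets are null-measurable for any finite Borel measure on a Polish space. -/
lemma analytic_nullMeasurable {X : Type*} [TopologicalSpace X] [PolishSpace X]
    [MeasurableSpace X] [BorelSpace X]
    (μ : Measure X) [IsFiniteMeasure μ] {A : Set X} (hA : MeasureTheory.AnalyticSet A) :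
    NullMeasurableSet A μ := by
  have hKn : ∀ n : ℕ, ∃ K : Set X, IsCompact K ∧ K ⊆ A ∧ μ A ≤ μ K + ((n : ℝ≥0∞) + 1)⁻¹ := by
    intro n
    exact analytic_inner_compact μ hA
      (ENNReal.inv_ne_zero.2 (by simp [ENNReal.add_eq_top]))
  choose K hKc hKA hKm using hKn
  set s := ⋃ n, K n with hs
  have hSA : s ⊆ A := iUnion_subset hKA
  have hSmeas : MeasurableSet s :=
    MeasurableSet.iUnion fun n => (hKc n).isClosed.measurableSet
  have hμ : μ A ≤ μ s := by
    apply ENNReal.le_of_forall_pos_le_add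
    intro δ hδ _
    obtain ⟨n, hn⟩ := ENNReal.exists_inv_nat_lt (a := (δ : ℝ≥0∞)) (by exact_mod_cast hδ.ne')
    have h1 : ((n : ℝ≥0∞) + 1)⁻¹ ≤ ((n : ℝ≥0∞))⁻¹ :=
      ENNReal.inv_le_inv.2 le_self_add
    calc μ A ≤ μ (K n) + ((n : ℝ≥0∞) + 1)⁻¹ := hKm n
      _ ≤ μ s + ((n : ℝ≥0∞))⁻¹ :=
        add_le_add (measure_mono (subset_iUnion K n)) h1
      _ ≤ μ s + δ := add_le_add_right hn.le _
  have hμ' : μ s = μ A := le_antisymm (measure_mono hSA) hμ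
  have hnull : μ (toMeasurable μ A \ s) = 0 := by
    rw [measure_diff (hSA.trans (subset_toMeasurable μ A)) hSmeas.nullMeasurableSet
      (measure_ne_top μ s), measure_toMeasurable, hμ', tsub_self]
  have hAs : A = s ∪ A \ s := (union_diff_cancel hSA).symm
  rw [hAs]
  exact hSmeas.nullMeasurableSet.union
    (NullMeasurableSet.of_null
      (measure_mono_null (diff_subset_diff_left (subset_toMeasurable μ A)) hnull))

lemma relIter_isClosed {X : Type*} [TopologicalSpace X] [CompactSpace X] [T2Space X]
    {R : Set (X × X)} (hR : IsClosed R) : ∀ n, IsClosed (relIter R n)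
  | 0 => isClosed_eq continuous_fst continuous_snd
  | n + 1 => by
    have ih := relIter_isClosed hR n
    have hW : IsClosed {t : X × X × X | (t.1, t.2.1) ∈ R ∧ (t.2.1, t.2.2) ∈ relIter R n} :=
      (hR.preimage (continuous_fst.prodMk (continuous_fst.comp continuous_snd))).inter
        (ih.preimage ((continuous_fst.comp continuous_snd).prodMk
          (continuous_snd.comp continuous_snd)))
    have himg : IsCompact ((fun t : X × X × X => (t.1, t.2.2)) ''
        {t : X × X × X | (t.1, t.2.1) ∈ R ∧ (t.2.1, t.2.2) ∈ relIter R n}) :=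
      (hW.isCompact).image (continuous_fst.prodMk (continuous_snd.comp continuous_snd))
    have heq : (fun t : X × X × X => (t.1, t.2.2)) ''
        {t : X × X × X | (t.1, t.2.1) ∈ R ∧ (t.2.1, t.2.2) ∈ relIter R n} =
        relIter R (n + 1) := by
      ext ⟨x, z⟩
      constructor
      · rintro ⟨⟨a, b, c⟩, ⟨h1, h2⟩, heq⟩
        obtain ⟨rfl, rfl⟩ : a = x ∧ c = z := by
          simpa [Prod.ext_iff] using heq
        exact ⟨b, h1, h2⟩
      · rintro ⟨y, h1, h2⟩
        exact ⟨(x, y, z), ⟨h1, h2⟩, rfl⟩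
    exact heq ▸ himg.isClosed

lemma relDag_mono {X : Type*} {R : Set (X × X)} {A B : Set X} (h : A ⊆ B) :
    relDag R A ⊆ relDag R B := by
  rintro x ⟨y, hy, hxy⟩
  exact ⟨y, h hy, hxy⟩

lemma relDag_comp {X : Type*} (R : Set (X × X)) (n : ℕ) (B : Set X) :
    relDag R (relDag (relIter R n) B) = relDag (relIter R (n + 1)) B := by
  ext x
  simp only [relDag, relIter, mem_setOf_eq]
  constructor
  · rintro ⟨y, ⟨z, hz, hyz⟩, hxy⟩
    exact ⟨z, hz, y, hxy, hyz⟩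
  · rintro ⟨z, hz, y, hxy, hyz⟩
    exact ⟨y, ⟨z, hz, hyz⟩, hxy⟩

lemma relDag_eq_image {X : Type*} (S : Set (X × X)) (B : Set X) :
    relDag S B = Prod.fst '' (S ∩ (univ ×ˢ B)) := by
  ext x
  constructor
  · rintro ⟨y, hy, hxy⟩
    exact ⟨(x, y), ⟨hxy, mem_univ _, hy⟩, rfl⟩
  · rintro ⟨⟨a, b⟩, ⟨hS, -, hB⟩, rfl⟩
    exact ⟨b, hB, hS⟩

/-- **Steps 1 and 2 in the proof of the paper's Theorem 1.1**: properties of the sets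
`E_n := ⋃_{j ≥ n} (R^j)†(B)` (with `(R⁰)†(B) = B`, which holds since `R⁰` is the
identity relation). -/
theorem recurrence_sets_properties
    {X : Type*} [TopologicalSpace X] [CompactSpace X] [TopologicalSpace.MetrizableSpace X]
    [MeasurableSpace X] [BorelSpace X]
    (R : Set (X × X)) (hR : IsClosed R)
    (μ : Measure X) [IsProbabilityMeasure μ]
    (hinv : ∀ K : Set X, IsCompact K → μ K ≤ μ (relDag R K))
    (B : Set X) (hB : MeasurableSet B)
    (E : ℕ → Set X) (hE : ∀ n, E n = ⋃ j ∈ {j : ℕ | n ≤ j}, relDag (relIter R j) B) :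
    (∀ n, NullMeasurableSet (E n) μ) ∧
    (∀ n, E (n + 1) ⊆ E n) ∧
    (∀ n, relDag R (E n) = E (n + 1)) ∧
    (∀ n, μ (E n) = μ (E 0)) := by
  haveI : PolishSpace X := by
    letI := TopologicalSpace.metrizableSpaceMetric X
    infer_instance
  -- each E n is analytic
  have hAn : ∀ n : ℕ, MeasureTheory.AnalyticSet (E n) := by
    intro n
    have hEn : E n = ⋃ k : ℕ, relDag (relIter R (n + k)) B := by
      rw [hE n]
      ext x
      simp only [mem_iUnion, mem_setOf_eq, exists_prop]
      constructor
      · rintro ⟨j, hj, hx⟩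
        exact ⟨j - n, by rwa [Nat.add_sub_cancel' hj]⟩
      · rintro ⟨k, hx⟩
        exact ⟨n + k, Nat.le_add_right _ _, hx⟩
    rw [hEn]
    refine MeasureTheory.AnalyticSet.iUnion fun k => ?_
    rw [relDag_eq_image]
    exact ((((relIter_isClosed hR (n + k)).measurableSet).inter
      (MeasurableSet.univ.prod hB)).analyticSet).image_of_continuous continuous_fst
  have h1 : ∀ n, NullMeasurableSet (E n) μ := fun n => analytic_nullMeasurable μ (hAn n)
  have h2 : ∀ n, E (n + 1) ⊆ E n := by
    intro n x hx
    rw [hE (n + 1)] at hx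
    rcases mem_iUnion₂.1 hx with ⟨j, hj, hxj⟩
    rw [hE n]
    exact mem_iUnion₂.2 ⟨j, le_trans (Nat.le_succ n) hj, hxj⟩
  have h3 : ∀ n, relDag R (E n) = E (n + 1) := by
    intro n
    ext x
    constructor
    · rintro ⟨y, hy, hxy⟩
      rw [hE n] at hy
      rcases mem_iUnion₂.1 hy with ⟨j, hj, hyB⟩
      have hx : x ∈ relDag (relIter R (j + 1)) B := by
        rw [← relDag_comp]
        exact ⟨y, hyB, hxy⟩
      rw [hE (n + 1)]
      exact mem_iUnion₂.2 ⟨j + 1, Nat.succ_le_succ hj, hx⟩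
    · intro hx
      rw [hE (n + 1)] at hx
      rcases mem_iUnion₂.1 hx with ⟨j, hj, hxB⟩
      obtain ⟨j', rfl⟩ : ∃ j', j = j' + 1 :=
        ⟨j - 1, (Nat.succ_pred_eq_of_pos (lt_of_lt_of_le (Nat.succ_pos n) hj)).symm⟩
      rw [← relDag_comp] at hxB
      rcases hxB with ⟨y, hy, hxy⟩
      refine ⟨y, ?_, hxy⟩
      rw [hE n]
      exact mem_iUnion₂.2 ⟨j', Nat.succ_le_succ_iff.1 hj, hy⟩
  refine ⟨h1, h2, h3, ?_⟩
  have hle : ∀ n, μ (E n) ≤ μ (E (n + 1)) := by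
    intro n
    apply ENNReal.le_of_forall_pos_le_add
    intro δ hδ _
    obtain ⟨K, hKc, hKE, hKm⟩ := analytic_inner_compact μ (hAn n)
      (ε := (δ : ℝ≥0∞)) (by exact_mod_cast hδ.ne')
    calc μ (E n) ≤ μ K + δ := hKm
      _ ≤ μ (relDag R K) + δ := add_le_add_left (hinv K hKc) _
      _ ≤ μ (E (n + 1)) + δ := by
          refine add_le_add_left (measure_mono ?_) _
          rw [← h3 n]
          exact relDag_mono hKE
  have heq : ∀ n, μ (E (n + 1)) = μ (E n) :=
    fun n => le_antisymm (measure_mono (h2 n)) (hle n)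
  intro n
  induction n with
  | zero => rfl
  | succ n ih => rw [heq n, ih]
end

section
/- Let X be a compact metrizable space equipped with its Borel σ-algebra, let R be a closed relation on X, let d > 0 be a real number, and let μ be a finite Borel measure on X such that: (i) μ(R(U)) ≤ d·μ(U) for every open set U ⊆ X (note that R(U) is σ-compact, hence Borel), and (ii) μ(K) ≤ μ(R(K)) for every compact set K ⊆ X. If A ⊆ X is such that both A and R(A) are μ-null-measurable, then (1/d)·μ(R(A)) ≤ μ(A) ≤ μ(R(A)) (measures computed in the completion of μ). -/
open MeasureTheory Set

theorem relImg_mono {X : Type*} (R : Set (X × X)) {A B : Set X} (h : A ⊆ B) :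
    relImg R A ⊆ relImg R B := fun y ⟨x, hx, hxy⟩ => ⟨x, h hx, hxy⟩

/-- **Relation-theoretic form of the paper's Lemma 5.4**: from
`μ(R(U)) ≤ d·μ(U)` for open `U` and `μ(K) ≤ μ(R(K))` for compact `K`, one obtains
`(1/d)·μ(R(A)) ≤ μ(A) ≤ μ(R(A))` for every `μ`-null-measurable set `A` with `R(A)`
also `μ`-null-measurable. -/
theorem forward_measure_inequality
    {X : Type*} [TopologicalSpace X] [CompactSpace X] [TopologicalSpace.MetrizableSpace X]
    [MeasurableSpace X] [BorelSpace X]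
    (R : Set (X × X)) (hR : IsClosed R)
    (d : ℝ) (hd : 0 < d)
    (μ : Measure X) [IsFiniteMeasure μ]
    (hopen : ∀ U : Set X, IsOpen U → μ (relImg R U) ≤ ENNReal.ofReal d * μ U)
    (hcpt : ∀ K : Set X, IsCompact K → μ K ≤ μ (relImg R K))
    (A : Set X) (hA : NullMeasurableSet A μ) (hA' : NullMeasurableSet (relImg R A) μ) :
    ENNReal.ofReal (1 / d) * μ (relImg R A) ≤ μ A ∧ μ A ≤ μ (relImg R A) := by
  letI : MetricSpace X := TopologicalSpace.metrizableSpaceMetric X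
  haveI : μ.InnerRegular := by infer_instance
  haveI : μ.OuterRegular := by infer_instance
  constructor
  · -- (1/d) μ(R A) ≤ μ A
    have key : μ (relImg R A) ≤ ENNReal.ofReal d * μ A := by
      refine ENNReal.le_of_forall_pos_le_add fun ε hε _ => ?_
      obtain ⟨U, hAU, hUo, hU⟩ :=
        Set.exists_isOpen_lt_of_lt A (μ A + ENNReal.ofReal (ε / d))
          (ENNReal.lt_add_right (measure_ne_top μ A)
            (by positivity))
      calc μ (relImg R A) ≤ μ (relImg R U) := measure_mono (relImg_mono R hAU)
        _ ≤ ENNReal.ofReal d * μ U := hopen U hUo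
        _ ≤ ENNReal.ofReal d * (μ A + ENNReal.ofReal (ε / d)) := mul_le_mul_right hU.le _
        _ = ENNReal.ofReal d * μ A + ENNReal.ofReal d * ENNReal.ofReal (ε / d) := by ring
        _ = ENNReal.ofReal d * μ A + ε := by
            rw [← ENNReal.ofReal_mul hd.le, mul_div_cancel₀ _ hd.ne',
              ENNReal.ofReal_coe_nnreal]
    calc ENNReal.ofReal (1 / d) * μ (relImg R A)
        ≤ ENNReal.ofReal (1 / d) * (ENNReal.ofReal d * μ A) := mul_le_mul_right key _
      _ = μ A := by
          rw [← mul_assoc, ← ENNReal.ofReal_mul (by positivity),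
            one_div, inv_mul_cancel₀ hd.ne', ENNReal.ofReal_one, one_mul]
  · -- μ A ≤ μ(R A)
    obtain ⟨B, hBA, hBm, hBae⟩ := hA.exists_measurable_subset_ae_eq
    have hμ : μ A = μ B := (measure_congr hBae).symm
    rw [hμ]
    rw [hBm.measure_eq_iSup_isCompact]
    exact iSup_le fun K => iSup_le fun hKB => iSup_le fun hK =>
      (hcpt K hK).trans (measure_mono (relImg_mono R (hKB.trans hBA)))
end
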